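/- Let 0 < ε ≤ 1 and let Z be a random variable with E[Z] = 1 and e^{−ε} ≤ Z ≤ e^{ε} almost surely. Then −8ε² ≤ E[ln Z] ≤ 0. -/
import Mathlib


open MeasureTheory

noncomputable section

lemma log_ptwise_bound {ε z : ℝ} (hε0 : 0 < ε) (hε1 : ε ≤ 1)
    (h1 : Real.exp (-ε) ≤ z) (h2 : z ≤ Real.exp ε) :
    z - 1 - 8 * ε ^ 2 ≤ Real.log z ∧ Real.log z ≤ z - 1 := by
  have hz0 : 0 < z := lt_of_lt_of_le (Real.exp_pos _) h1
  have hub : Real.log z ≤ z - 1 := Real.log_le_sub_one_of_pos hz0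
  refine ⟨?_, hub⟩
  have hinv : 1 - 1/z ≤ Real.log z := by
    have h := Real.log_le_sub_one_of_pos (show (0:ℝ) < 1/z by positivity)
    rw [one_div, Real.log_inv] at h
    rw [one_div]
    linarith
  have hkey : 1 - 1/z = (z - 1) - (z-1)^2 / z := by field_simp; ring
  rw [hkey] at hinv
  have hee : Real.exp ε ≤ 2.7182818286 := by
    calc Real.exp ε ≤ Real.exp 1 := Real.exp_le_exp.2 hε1
    _ ≤ 2.7182818286 := le_of_lt Real.exp_one_lt_d9
  have hexpneg : 1 - ε ≤ Real.exp (-ε) := by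
    have := Real.add_one_le_exp (-ε); linarith
  have hexpmul : Real.exp ε * Real.exp (-ε) = 1 := by
    rw [← Real.exp_add]; simp
  have hepos : 0 < Real.exp ε := Real.exp_pos ε
  -- e^ε - 1 ≤ ε e^ε
  have he1 : Real.exp ε - 1 ≤ ε * Real.exp ε := by nlinarith
  have hgoal : (z-1)^2 / z ≤ 8 * ε ^ 2 := by
    rcases le_total 1 z with hz1 | hz1
    · have : (z-1)^2 / z ≤ (z-1)^2 := by
        apply div_le_self (by positivity) hz1
      have hb1 : z - 1 ≤ 2.7182818286 * ε := by
        have := mul_le_mul_of_nonneg_left hee hε0.le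
        nlinarith
      have hb2 : (z-1)^2 ≤ (2.7182818286 * ε)^2 := by
        apply pow_le_pow_left₀ (by linarith) hb1
      nlinarith [sq_nonneg ε]
    · have hzinv : 1/z ≤ Real.exp ε := by
        rw [div_le_iff₀ hz0]
        nlinarith
      have h1e : 1 - z ≤ ε := by linarith
      have : (z-1)^2 / z = (z-1)^2 * (1/z) := by ring
      rw [this]
      have hsq : (z-1)^2 ≤ ε^2 := by nlinarith
      calc (z-1)^2 * (1/z) ≤ ε^2 * Real.exp ε := by
            apply mul_le_mul hsq hzinv (by positivity) (by positivity)
        _ ≤ 8 * ε^2 := by nlinarith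
  linarith

/-- If `E[Z] = 1` and `e^{-ε} ≤ Z ≤ e^{ε}` almost surely, with `0 < ε ≤ 1`,
then `-8ε² ≤ E[ln Z] ≤ 0`. -/
theorem log_expectation_bound {Ω : Type} [MeasurableSpace Ω]
    (μ : Measure Ω) [IsProbabilityMeasure μ]
    (ε : ℝ) (hε0 : 0 < ε) (hε1 : ε ≤ 1)
    (Z : Ω → ℝ) (hZm : Measurable Z)
    (hmean : (∫ ω, Z ω ∂μ) = 1)
    (hbound : ∀ᵐ ω ∂μ, Real.exp (-ε) ≤ Z ω ∧ Z ω ≤ Real.exp ε) :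
    -8 * ε ^ 2 ≤ (∫ ω, Real.log (Z ω) ∂μ) ∧ (∫ ω, Real.log (Z ω) ∂μ) ≤ 0 := by
  have hZint : Integrable Z μ := by
    apply Integrable.mono' (integrable_const (Real.exp ε)) hZm.aestronglyMeasurable
    filter_upwards [hbound] with ω ⟨ha, hb⟩
    rw [Real.norm_eq_abs, abs_le]
    exact ⟨by nlinarith [Real.exp_pos (-ε)], hb⟩
  have hLint : Integrable (fun ω => Real.log (Z ω)) μ := by
    apply Integrable.mono' (integrable_const ε)
      (Real.measurable_log.comp hZm).aestronglyMeasurable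
    filter_upwards [hbound] with ω ⟨ha, hb⟩
    have hz0 : 0 < Z ω := lt_of_lt_of_le (Real.exp_pos _) ha
    rw [Real.norm_eq_abs, abs_le]
    constructor
    · calc -ε = Real.log (Real.exp (-ε)) := (Real.log_exp _).symm
        _ ≤ Real.log (Z ω) := Real.log_le_log (Real.exp_pos _) ha
    · calc Real.log (Z ω) ≤ Real.log (Real.exp ε) := Real.log_le_log hz0 hb
        _ = ε := Real.log_exp _
  have hf : Integrable (fun ω => Z ω - 1) μ := hZint.sub (integrable_const 1)
  have hZ1 : (∫ ω, (Z ω - 1) ∂μ) = 0 := by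
    rw [integral_sub hZint (integrable_const 1), hmean, integral_const]
    simp
  constructor
  · have h : (∫ ω, (Z ω - 1 - 8 * ε ^ 2) ∂μ) ≤ ∫ ω, Real.log (Z ω) ∂μ := by
      apply integral_mono_ae (hf.sub (integrable_const (8 * ε ^ 2))) hLint
      filter_upwards [hbound] with ω ⟨ha, hb⟩
      exact (log_ptwise_bound hε0 hε1 ha hb).1
    have h2 : (∫ ω, (Z ω - 1 - 8 * ε ^ 2) ∂μ) = -8 * ε ^ 2 := by
      rw [integral_sub hf (integrable_const _), hZ1, integral_const]
      simp
    linarith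
  · have h : (∫ ω, Real.log (Z ω) ∂μ) ≤ ∫ ω, (Z ω - 1) ∂μ := by
      apply integral_mono_ae hLint hf
      filter_upwards [hbound] with ω ⟨ha, hb⟩
      exact (log_ptwise_bound hε0 hε1 ha hb).2
    linarith
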